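/- Let F be a local field with residue field of order q, p an odd prime not dividing q, and let G = Gal(F^tr/F) be the Galois group of the maximal tamely ramified extension, with presentation ⟨σ, τ | στσ^{-1} = τ^q⟩ (as profinite group). Suppose A is a complete local ring with maximal ideal m_A, residue field k of characteristic p, and ρ: G → GL_2(A) is a representation with ρ(σ) = diag(qα̂(1+s), (α̂(1+s))^{-1}) and ρ(τ) = [[a,t₁],[t₂,d]] with s, t₁, t₂, a−1, d−1 ∈ m_A and ad − t₁t₂ = 1. If α² ≠ 1 in k (where α is the residue of α̂), then t₁ = 0; if q²α² ≠ 1 in k, then t₂ = 0. -/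

import Mathlib

open IsLocalRing


def hpol {A : Type*} [CommRing A] (t : A) : ℕ → A
  | 0 => 0
  | 1 => 1
  | (n+2) => t * hpol t (n+1) - hpol t n

lemma pow_succ_eq {A : Type*} [CommRing A] (a t₁ t₂ d : A) (hdet : a * d - t₁ * t₂ = 1)
    (n : ℕ) :
    (!![a, t₁; t₂, d] : Matrix (Fin 2) (Fin 2) A) ^ (n+1) =
      !![hpol (a+d) (n+1) * a - hpol (a+d) n, hpol (a+d) (n+1) * t₁;
         hpol (a+d) (n+1) * t₂, hpol (a+d) (n+1) * d - hpol (a+d) n] := by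
  induction n with
  | zero => simp [hpol]
  | succ n ih =>
      rw [pow_succ, ih, Matrix.mul_fin_two]
      ext i j
      fin_cases i <;> fin_cases j <;> simp [hpol] <;>
        first
          | ring1
          | linear_combination (-(hpol (a+d) (n+1))) * hdet

lemma residue_hpol {A : Type*} [CommRing A] [IsLocalRing A] (t : A)
    (htm : t - 2 ∈ maximalIdeal A) (n : ℕ) : residue A (hpol t n) = n := by
  have ht2 : residue A t = 2 := by
    have : residue A (t - 2) = 0 := (Ideal.Quotient.eq_zero_iff_mem).2 htm
    have := sub_eq_zero.mp (by simpa using this)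
    rw [this]; exact map_ofNat (residue A) 2
  suffices h : ∀ n, residue A (hpol t n) = n ∧ residue A (hpol t (n+1)) = n+1 from (h n).1
  intro n
  induction n with
  | zero => simp [hpol]
  | succ n ih =>
      refine ⟨by push_cast; exact ih.2, ?_⟩
      show residue A (hpol t (n+2)) = _
      rw [show hpol t (n+2) = t * hpol t (n+1) - hpol t n from rfl]
      rw [map_sub, map_mul, ht2, ih.1, ih.2]
      push_cast; ring

/-- tame local deformation relation.  With
`ρ(σ) = diag(q·α̂(1+s), (α̂(1+s))⁻¹)`, `ρ(τ) = [[a,t₁],[t₂,d]]` satisfying the tame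
relation `στσ⁻¹ = τ^q` (expressed as `S·T = T^q·S`), `s, t₁, t₂, a−1, d−1 ∈ m_A` and
`ad − t₁t₂ = 1`: if `α² ≠ 1` in the residue field then `t₁ = 0`, and if `q²α² ≠ 1`
in the residue field then `t₂ = 0`. -/
theorem tame_relation_forces_triangular
    (p q : ℕ) (hp : p.Prime) (hodd : p ≠ 2) (hpq : ¬ p ∣ q) (hq : IsPrimePow q)
    (A : Type*) [CommRing A] [IsLocalRing A]
    [IsAdicComplete (maximalIdeal A) A]
    [CharP (ResidueField A) p]
    (αhat : Aˣ) (s t₁ t₂ a d w : A)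
    (hs : s ∈ maximalIdeal A) (ht₁ : t₁ ∈ maximalIdeal A) (ht₂ : t₂ ∈ maximalIdeal A)
    (ha : a - 1 ∈ maximalIdeal A) (hd : d - 1 ∈ maximalIdeal A)
    (hdet : a * d - t₁ * t₂ = 1)
    (hw : w * ((αhat : A) * (1 + s)) = 1)
    (S T : Matrix (Fin 2) (Fin 2) A)
    (hS : S = !![(q : A) * ((αhat : A) * (1 + s)), 0; 0, w])
    (hT : T = !![a, t₁; t₂, d])
    (hrel : S * T = T ^ q * S) :
    ((residue A (αhat : A)) ^ 2 ≠ 1 → t₁ = 0) ∧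
      (((q : ResidueField A) * residue A (αhat : A)) ^ 2 ≠ 1 → t₂ = 0) := by
  subst hS hT
  set u : A := (αhat : A) * (1 + s) with hu
  obtain ⟨m, rfl⟩ : ∃ m, q = m + 1 := ⟨q - 1, by have := hq.one_lt; omega⟩
  set H : A := hpol (a + d) (m + 1) with hH
  rw [pow_succ_eq a t₁ t₂ d hdet m] at hrel
  have h01 := (Matrix.ext_iff.2 hrel) 0 1
  have h10 := (Matrix.ext_iff.2 hrel) 1 0
  simp [Matrix.mul_apply, Fin.sum_univ_two] at h01 h10
  -- h01 : (q:A) * u * t₁ = H * t₁ * w  (up to assoc), h10 similarly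
  have key1 : t₁ * (((m : A) + 1) * u * u - H) = 0 := by
    linear_combination u * h01 + H * t₁ * hw
  have key2 : t₂ * (1 - H * ((m : A) + 1) * u * u) = 0 := by
    linear_combination u * h10 - t₂ * hw
  have htr : (a + d) - 2 ∈ maximalIdeal A := by
    have : (a + d) - 2 = (a - 1) + (d - 1) := by ring
    rw [this]; exact add_mem ha hd
  have rH : residue A H = ((m + 1 : ℕ) : ResidueField A) := residue_hpol _ htr _
  have ru : residue A u = residue A (αhat : A) := by
    have hs0 : residue A s = 0 := (Ideal.Quotient.eq_zero_iff_mem).2 hs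
    simp [hu, map_mul, map_add, hs0]
  have hqk : ((m + 1 : ℕ) : ResidueField A) ≠ 0 := by
    intro h
    exact hpq ((CharP.cast_eq_zero_iff (ResidueField A) p _).1 h)
  constructor
  · intro hα
    have hx : IsUnit (((m : A) + 1) * u * u - H) := by
      by_contra hnx
      have hxm : ((m : A) + 1) * u * u - H ∈ maximalIdeal A := hnx
      have this : residue A (((m : A) + 1) * u * u - H) = 0 :=
        (Ideal.Quotient.eq_zero_iff_mem).2 hxm
      rw [map_sub, map_mul, map_mul, rH, ru, map_add, map_natCast, map_one] at this
      push_cast at this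
      have : ((m+1 : ℕ) : ResidueField A) * ((residue A (αhat : A))^2 - 1) = 0 := by
        push_cast
        linear_combination this
      rcases mul_eq_zero.1 this with h | h
      · exact hqk h
      · exact hα (by linear_combination h)
    exact (IsUnit.mul_left_eq_zero hx).1 key1
  · intro hα
    have hx : IsUnit (1 - H * ((m : A) + 1) * u * u) := by
      by_contra hnx
      have hxm : 1 - H * ((m : A) + 1) * u * u ∈ maximalIdeal A := hnx
      have this : residue A (1 - H * ((m : A) + 1) * u * u) = 0 :=
        (Ideal.Quotient.eq_zero_iff_mem).2 hxm
      rw [map_sub, map_mul, map_mul, map_mul, rH, ru, map_add, map_natCast, map_one] at this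
      push_cast at this
      exact hα (by push_cast at this ⊢; linear_combination -this)
    exact (IsUnit.mul_left_eq_zero hx).1 key2
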